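/- Let θ(t) = t^{1/2}(log(1/t))^{3/2} and let λ > 0. Let σ be the solution of the ordinary differential equation (d/dt) log(σ(t)/(t σ′(t))) = θ(λt)/t with initial conditions σ(0) = 0 and σ′(0) = 1. Then there exists an absolute constant N such that for all t with 0 ≤ λt ≤ 1 one has t/N ≤ σ(t) ≤ t and 1/N ≤ σ′(t) ≤ 1. -/

import Mathlib

open MeasureTheory Set Filter

noncomputable section

abbrev Eu (n : ℕ) : Type := EuclideanSpace ℝ (Fin n)

/-- `i`-th spatial partial derivative. -/
noncomputable def pd (n : ℕ) (i : Fin n) (f : Eu n → ℝ) (x : Eu n) : ℝ :=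
  fderiv ℝ f x (EuclideanSpace.single i 1)

/-- Spatial divergence `div (A ∇u)` for a time-dependent coefficient matrix. -/
noncomputable def divAGrad (n : ℕ) (A : Eu n → ℝ → Matrix (Fin n) (Fin n) ℝ)
    (u : Eu n → ℝ → ℝ) (x : Eu n) (t : ℝ) : ℝ :=
  ∑ i, pd n i (fun y => ∑ j, A y t i j * pd n j (fun z => u z t) y) x

/-- Squared Frobenius norm of the spatial Hessian. -/
noncomputable def hessSq (n : ℕ) (w : Eu n → ℝ → ℝ) (x : Eu n) (t : ℝ) : ℝ :=
  ∑ i, ∑ j, (pd n i (fun y => pd n j (fun z => w z t) y) x) ^ 2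

/-- Symmetry, uniform ellipticity and space-time (parabolic) Lipschitz regularity of `A`. -/
def IsEllipLip (n : ℕ) (Λ K : ℝ) (A : Eu n → ℝ → Matrix (Fin n) (Fin n) ℝ) : Prop :=
  (∀ x t, (A x t).IsSymm) ∧
  (∀ (x : Eu n) (t : ℝ) (ξ : Eu n),
      Λ⁻¹ * ‖ξ‖ ^ 2 ≤ ∑ i, ∑ j, A x t i j * ξ i * ξ j ∧
        ∑ i, ∑ j, A x t i j * ξ i * ξ j ≤ Λ * ‖ξ‖ ^ 2) ∧
  (∀ (x y : Eu n) (t s : ℝ) (i j : Fin n),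
      |A x t i j - A y s i j| ≤ K * (‖x - y‖ + |t - s| ^ ((1:ℝ)/2)))

/-- The weight `θ(t) = t^{1/2} (log(1/t))^{3/2}`. -/
noncomputable def thetaFn (t : ℝ) : ℝ := t ^ ((1:ℝ)/2) * (Real.log (1/t)) ^ ((3:ℝ)/2)

/-- Gaussian kernel `G(x,t) = t^{-n/2} e^{-|x|²/(4t)}`. -/
noncomputable def Gk (n : ℕ) (x : Eu n) (t : ℝ) : ℝ :=
  t ^ (-(n:ℝ)/2) * Real.exp (-‖x‖ ^ 2 / (4 * t))

/-- The function `σ` (with derivative `σ'`) solving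
`(d/dt) log (σ/(t σ')) = θ(λ t)/t`, `σ(0) = 0`, `σ'(0) = 1` on `[0, 1/λ]`. -/
def SigmaODE (lam : ℝ) (σ σ' : ℝ → ℝ) : Prop :=
  σ 0 = 0 ∧ σ' 0 = 1 ∧
  ContinuousOn σ' (Icc 0 (1/lam)) ∧
  (∀ t ∈ Icc (0:ℝ) (1/lam), HasDerivWithinAt σ (σ' t) (Icc 0 (1/lam)) t) ∧
  (∀ t ∈ Ioc (0:ℝ) (1/lam), 0 < σ t ∧ 0 < σ' t) ∧
  (∀ t ∈ Ioc (0:ℝ) (1/lam),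
    HasDerivWithinAt (fun s => Real.log (σ s) - Real.log s - Real.log (σ' s))
      (thetaFn (lam * t) / t) (Icc 0 (1/lam)) t)

/-- Smooth functions compactly supported in `S × [0, T)`. -/
def TestFn (n : ℕ) (S : Set (Eu n)) (T : ℝ) (w : Eu n → ℝ → ℝ) : Prop :=
  ContDiff ℝ (⊤ : ℕ∞) (fun p : Eu n × ℝ => w p.1 p.2) ∧
  HasCompactSupport (fun p : Eu n × ℝ => w p.1 p.2) ∧
  tsupport (fun p : Eu n × ℝ => w p.1 p.2) ⊆ S ×ˢ Ico 0 T

/-- `‖V‖_{L^∞(Q₄)}`. -/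
noncomputable def VsupQ4 (n : ℕ) (V : Eu n → ℝ → ℝ) : ℝ :=
  sSup {y | ∃ x ∈ Metric.ball (0:Eu n) 4, ∃ t ∈ Icc (0:ℝ) 16, y = |V x t|}

/-- `‖∇ₓV‖_{L^∞(Q₄)}`. -/
noncomputable def VgradSupQ4 (n : ℕ) (V : Eu n → ℝ → ℝ) : ℝ :=
  sSup {y | ∃ x ∈ Metric.ball (0:Eu n) 4, ∃ t ∈ Icc (0:ℝ) 16,
    y = ‖gradient (fun z => V z t) x‖}

/-- `‖V‖₁ = ‖V‖_{L^∞(Q₄)} + ‖∇ₓV‖_{L^∞(Q₄)}`. -/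
noncomputable def Vnorm1 (n : ℕ) (V : Eu n → ℝ → ℝ) : ℝ := VsupQ4 n V + VgradSupQ4 n V

/-- `[V]_{1/2}`, the `1/2`-Hölder seminorm of `V` in time on `Q₄`. -/
noncomputable def Vhalf (n : ℕ) (V : Eu n → ℝ → ℝ) : ℝ :=
  sSup {y | ∃ x ∈ Metric.ball (0:Eu n) 4, ∃ t ∈ Icc (0:ℝ) 16, ∃ s ∈ Icc (0:ℝ) 16,
    t ≠ s ∧ y = |V x t - V x s| / |t - s| ^ ((1:ℝ)/2)}

/-- Regularity of `V`: bounded, `C¹` in space with bounded spatial gradient,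
and uniformly `1/2`-Hölder continuous in time on `Q₄`. -/
def VReg (n : ℕ) (V : Eu n → ℝ → ℝ) : Prop :=
  (∃ C, ∀ x ∈ Metric.ball (0:Eu n) 4, ∀ t ∈ Icc (0:ℝ) 16, |V x t| ≤ C) ∧
  (∀ t ∈ Icc (0:ℝ) 16, ContDiffOn ℝ 1 (fun x => V x t) (Metric.ball (0:Eu n) 4)) ∧
  (∃ C, ∀ x ∈ Metric.ball (0:Eu n) 4, ∀ t ∈ Icc (0:ℝ) 16,
      ‖gradient (fun z => V z t) x‖ ≤ C) ∧
  (∃ C, ∀ x ∈ Metric.ball (0:Eu n) 4, ∀ t ∈ Icc (0:ℝ) 16, ∀ s ∈ Icc (0:ℝ) 16,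
      |V x t - V x s| ≤ C * |t - s| ^ ((1:ℝ)/2))

/-- `u` is a classical solution of `∂ₜu + div(A∇u) + Vu = 0` in `Q₄ = B₄ × [0,16]`:
`C²` in space, `C¹` in time, and the equation holds pointwise. -/
def IsSolQ4 (n : ℕ) (A : Eu n → ℝ → Matrix (Fin n) (Fin n) ℝ) (V u : Eu n → ℝ → ℝ) : Prop :=
  (∀ t ∈ Icc (0:ℝ) 16, ContDiffOn ℝ 2 (fun x => u x t) (Metric.ball (0:Eu n) 4)) ∧
  (∀ x ∈ Metric.ball (0:Eu n) 4, ContDiffOn ℝ 1 (fun s => u x s) (Icc (0:ℝ) 16)) ∧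
  (∀ x ∈ Metric.ball (0:Eu n) 4, ∀ t ∈ Icc (0:ℝ) 16,
      deriv (fun s => u x s) t + divAGrad n A u x t + V x t * u x t = 0)

/-- `‖V(·,0)‖_{L^∞(B₄)}`. -/
noncomputable def V0sup (n : ℕ) (V0 : Eu n → ℝ) : ℝ :=
  sSup {y | ∃ x ∈ Metric.ball (0:Eu n) 4, y = |V0 x|}

/-- `‖∇V(·,0)‖_{L^∞(B₄)}`. -/
noncomputable def V0gradSup (n : ℕ) (V0 : Eu n → ℝ) : ℝ :=
  sSup {y | ∃ x ∈ Metric.ball (0:Eu n) 4, y = ‖gradient V0 x‖}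

namespace Stmt1Aux
open Topology Real

/-- monotone comparison on (0, b]. -/
lemma le_of_deriv_nonneg {b : ℝ} {f f' : ℝ → ℝ}
    (hd : ∀ s ∈ Ioc (0:ℝ) b, HasDerivWithinAt f (f' s) (Icc 0 b) s)
    (h0 : ∀ s ∈ Ioc (0:ℝ) b, 0 ≤ f' s)
    {ε t : ℝ} (hε : 0 < ε) (het : ε ≤ t) (htb : t ≤ b) : f ε ≤ f t := by
  have hsub : Icc ε t ⊆ Ioc 0 b := fun s hs => ⟨hε.trans_le hs.1, hs.2.trans htb⟩
  have hsub2 : Icc ε t ⊆ Icc 0 b := fun s hs => ⟨hε.le.trans hs.1, hs.2.trans htb⟩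
  have hmono : MonotoneOn f (Icc ε t) := by
    apply monotoneOn_of_hasDerivWithinAt_nonneg (convex_Icc ε t)
      (fun s hs => ((hd s (hsub hs)).mono hsub2).continuousWithinAt)
    · intro s hs
      rw [interior_Icc] at hs
      have hmem : s ∈ Ioc (0:ℝ) b := hsub ⟨hs.1.le, hs.2.le⟩
      exact (((hd s hmem).hasDerivAt
        (Icc_mem_nhds (hε.trans hs.1) (hs.2.trans_le htb))).hasDerivWithinAt)
    · intro s hs
      rw [interior_Icc] at hs
      exact h0 s (hsub ⟨hs.1.le, hs.2.le⟩)
  exact hmono ⟨le_rfl, het⟩ ⟨het, le_rfl⟩ het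

lemma le_of_lim {b : ℝ} {f f' : ℝ → ℝ} {L : ℝ}
    (hd : ∀ s ∈ Ioc (0:ℝ) b, HasDerivWithinAt f (f' s) (Icc 0 b) s)
    (h0 : ∀ s ∈ Ioc (0:ℝ) b, 0 ≤ f' s)
    (hT : Tendsto f (𝓝[>] (0:ℝ)) (𝓝 L))
    {t : ℝ} (ht : t ∈ Ioc 0 b) : L ≤ f t :=
  le_of_tendsto hT (eventually_of_mem (Ioc_mem_nhdsGT ht.1)
    (fun ε hε => le_of_deriv_nonneg hd h0 hε.1 hε.2 ht.2))

lemma key_num {L : ℝ} (hL : 0 ≤ L) : L ^ ((3:ℝ)/2) ≤ 64 * Real.exp (L/4) := by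
  rcases le_or_gt L 1 with h | h
  · have h1 : L ^ ((3:ℝ)/2) ≤ 1 := Real.rpow_le_one hL h (by norm_num)
    have h2 : (1:ℝ) ≤ Real.exp (L/4) := Real.one_le_exp (by positivity)
    nlinarith
  · have h32 : L ^ ((3:ℝ)/2) ≤ L ^ (2:ℝ) := Real.rpow_le_rpow_of_exponent_le h.le (by norm_num)
    have h2 : L ^ (2:ℝ) = L ^ 2 := by
      rw [← Real.rpow_natCast L 2]; norm_num
    rw [h2] at h32
    have he : Real.exp (L/4) = Real.exp (L/8) * Real.exp (L/8) := by
      rw [← Real.exp_add]; ring_nf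
    nlinarith [Real.add_one_le_exp (L/8), Real.exp_pos (L/8), sq_nonneg (L/8)]

lemma theta_nonneg {u : ℝ} (hu0 : 0 < u) (hu1 : u ≤ 1) : 0 ≤ thetaFn u := by
  have h1 : (0:ℝ) ≤ Real.log (1/u) := Real.log_nonneg (by
    rw [le_div_iff₀ hu0]; linarith)
  have h2 : (0:ℝ) ≤ u ^ ((1:ℝ)/2) := Real.rpow_nonneg hu0.le _
  exact mul_nonneg h2 (Real.rpow_nonneg h1 _)

lemma theta_bound {lam s : ℝ} (hlam : 0 < lam) (hs : s ∈ Ioc (0:ℝ) (1/lam)) :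
    thetaFn (lam*s) / s ≤ 64 * lam * (lam*s) ^ (-(3:ℝ)/4) := by
  set u := lam * s with hu
  have hu0 : 0 < u := mul_pos hlam hs.1
  have hu1 : u ≤ 1 := by
    rw [hu, ← le_div_iff₀' hlam]; exact hs.2
  set L := Real.log (1/u) with hLdef
  have hL0 : 0 ≤ L := Real.log_nonneg (by rw [le_div_iff₀ hu0]; linarith)
  have hlogu : Real.log u = -L := by
    rw [hLdef, one_div, Real.log_inv, neg_neg]
  -- u^{1/4} = exp(-L/4)
  have h14 : u ^ ((1:ℝ)/4) = Real.exp (-(L/4)) := by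
    rw [Real.rpow_def_of_pos hu0, hlogu]; ring_nf
  -- key : u^{1/4} * L^{3/2} ≤ 64
  have hkey : u ^ ((1:ℝ)/4) * L ^ ((3:ℝ)/2) ≤ 64 := by
    have := key_num hL0
    rw [h14]
    have hexp : Real.exp (-(L/4)) * Real.exp (L/4) = 1 := by
      rw [← Real.exp_add]; simp
    nlinarith [Real.exp_pos (-(L/4)), Real.exp_pos (L/4),
      Real.rpow_nonneg hL0 ((3:ℝ)/2)]
  -- thetaFn u / s = lam * (u^{-1/2} * L^{3/2})
  have hs0 : (0:ℝ) < s := hs.1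
  have e1 : thetaFn u / s = lam * (u ^ (-(1:ℝ)/2) * L ^ ((3:ℝ)/2)) := by
    have e2 : u ^ ((1:ℝ)/2) = u ^ (-(1:ℝ)/2) * u := by
      rw [← Real.rpow_add_one hu0.ne']; norm_num
    rw [thetaFn, ← hLdef, e2, hu]
    field_simp
  have e3 : u ^ (-(1:ℝ)/2) = u ^ (-(3:ℝ)/4) * u ^ ((1:ℝ)/4) := by
    rw [← Real.rpow_add hu0]; norm_num
  rw [e1, e3]
  have h34 : (0:ℝ) ≤ u ^ (-(3:ℝ)/4) := Real.rpow_nonneg hu0.le _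
  calc lam * (u ^ (-(3:ℝ)/4) * u ^ ((1:ℝ)/4) * L ^ ((3:ℝ)/2))
      = lam * u ^ (-(3:ℝ)/4) * (u ^ ((1:ℝ)/4) * L ^ ((3:ℝ)/2)) := by ring
    _ ≤ lam * u ^ (-(3:ℝ)/4) * 64 := by
        apply mul_le_mul_of_nonneg_left hkey (by positivity)
    _ = 64 * lam * u ^ (-(3:ℝ)/4) := by ring

lemma pow_quarter_deriv {lam : ℝ} (hlam : 0 < lam) {s : ℝ} (hs : 0 < s) (c : ℝ) :
    HasDerivAt (fun x => c * (lam*x) ^ ((1:ℝ)/4)) (c/4 * lam * (lam*s) ^ (-(3:ℝ)/4)) s := by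
  have h1 : HasDerivAt (fun x : ℝ => lam * x) lam s := by
    simpa using (hasDerivAt_id s).const_mul lam
  have h2 : HasDerivAt (fun y : ℝ => y ^ ((1:ℝ)/4))
      (((1:ℝ)/4) * (lam*s) ^ ((1:ℝ)/4 - 1)) (lam * s) :=
    Real.hasDerivAt_rpow_const (Or.inl (by positivity))
  have h3 := (h2.comp s h1).const_mul c
  refine h3.congr_deriv ?_
  rw [show (1:ℝ)/4 - 1 = -(3:ℝ)/4 by norm_num]
  ring

end Stmt1Aux

section Stmt1Proof
open Real Topology Stmt1Aux

/-- Properties of the solution `σ` of the ODE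
`(d/dt) log(σ/(tσ')) = θ(λt)/t`, `σ(0)=0`, `σ'(0)=1`:
there is an absolute constant `N` such that `t/N ≤ σ(t) ≤ t` and
`1/N ≤ σ'(t) ≤ 1` whenever `0 ≤ λt ≤ 1`. -/
theorem stmt1 :
    ∃ N : ℝ, 0 < N ∧
      ∀ lam : ℝ, 0 < lam → ∀ σ σ' : ℝ → ℝ, SigmaODE lam σ σ' →
        ∀ t : ℝ, 0 ≤ t → lam * t ≤ 1 →
          t / N ≤ σ t ∧ σ t ≤ t ∧ 1 / N ≤ σ' t ∧ σ' t ≤ 1 := by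
  refine ⟨Real.exp 1280, Real.exp_pos _, ?_⟩
  intro lam hlam σ σ' h t ht0 hlt1
  obtain ⟨h0σ, h0σ', hcont, hderiv, hpos, hF⟩ := h
  set b : ℝ := 1/lam with hbdef
  have hb : 0 < b := by positivity
  set F : ℝ → ℝ := fun s => Real.log (σ s) - Real.log s - Real.log (σ' s) with hFdef
  set G : ℝ → ℝ := fun s => Real.log (σ s) - Real.log s with hGdef
  -- limits at 0⁺
  have hslope : Tendsto (fun ε => σ ε / ε) (𝓝[>] (0:ℝ)) (𝓝 1) := by
    have h0 : HasDerivWithinAt σ 1 (Icc 0 b) 0 := by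
      have := hderiv 0 ⟨le_rfl, hb.le⟩; rwa [h0σ'] at this
    rw [hasDerivWithinAt_iff_tendsto_slope] at h0
    have hsub : Ioc (0:ℝ) b ⊆ Icc 0 b \ {0} :=
      fun s hs => ⟨⟨hs.1.le, hs.2⟩, ne_of_gt hs.1⟩
    have h1 := h0.mono_left (nhdsWithin_mono 0 hsub)
    rw [nhdsWithin_Ioc_eq_nhdsGT hb] at h1
    refine h1.congr' ?_
    filter_upwards [self_mem_nhdsWithin] with ε hε
    rw [slope_def_field, h0σ]
    simp
  have hGlim : Tendsto G (𝓝[>] (0:ℝ)) (𝓝 0) := by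
    have hlog : Tendsto (fun ε => Real.log (σ ε / ε)) (𝓝[>] (0:ℝ)) (𝓝 0) := by
      have := (Real.continuousAt_log one_ne_zero).tendsto.comp hslope
      simpa [Function.comp_def] using this
    refine hlog.congr' ?_
    filter_upwards [Ioc_mem_nhdsGT hb] with ε hε
    rw [Real.log_div (ne_of_gt (hpos ε hε).1) (ne_of_gt hε.1)]
  have hσ'lim : Tendsto (fun ε => Real.log (σ' ε)) (𝓝[>] (0:ℝ)) (𝓝 0) := by
    have hc : ContinuousWithinAt σ' (Icc 0 b) 0 := hcont 0 ⟨le_rfl, hb.le⟩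
    have h1 : Tendsto σ' (𝓝[Icc 0 b] 0) (𝓝 1) := by
      rw [← h0σ']; exact hc
    have h2 : Tendsto σ' (𝓝[>] (0:ℝ)) (𝓝 1) := by
      rw [← nhdsWithin_Ioc_eq_nhdsGT hb]
      exact h1.mono_left (nhdsWithin_mono _ Ioc_subset_Icc_self)
    have := (Real.continuousAt_log one_ne_zero).tendsto.comp h2
    simpa [Function.comp_def] using this
  have hFlim : Tendsto F (𝓝[>] (0:ℝ)) (𝓝 0) := by
    have := hGlim.sub hσ'lim
    simpa using this
  have hHlim : ∀ c : ℝ, Tendsto (fun s => c * (lam*s) ^ ((1:ℝ)/4)) (𝓝[>] (0:ℝ)) (𝓝 0) := by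
    intro c
    have hc : ContinuousAt (fun s : ℝ => c * (lam*s) ^ ((1:ℝ)/4)) 0 := by
      exact continuousAt_const.mul ((continuousAt_const.mul continuousAt_id).rpow_const
        (Or.inr (by norm_num)))
    have h1 : Tendsto (fun s => c * (lam*s) ^ ((1:ℝ)/4)) (𝓝[>] (0:ℝ))
        (𝓝 (c * (lam*(0:ℝ)) ^ ((1:ℝ)/4))) := tendsto_nhdsWithin_of_tendsto_nhds hc.tendsto
    have hval : c * (lam*(0:ℝ)) ^ ((1:ℝ)/4) = 0 := by
      rw [mul_zero, Real.zero_rpow (by norm_num)]; ring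
    rwa [hval] at h1
  -- derivative of G
  have hGd : ∀ s ∈ Ioc (0:ℝ) b, HasDerivWithinAt G (σ' s / σ s - s⁻¹) (Icc 0 b) s := by
    intro s hs
    exact ((hderiv s (Ioc_subset_Icc_self hs)).log (ne_of_gt (hpos s hs).1)).sub
      ((Real.hasDerivAt_log (ne_of_gt hs.1)).hasDerivWithinAt)
  -- Step 1 : F ≤ H
  have hFleH : ∀ s ∈ Ioc (0:ℝ) b, F s ≤ 256 * (lam*s) ^ ((1:ℝ)/4) := by
    intro s hs
    have h1 := le_of_lim (b := b)
      (f := fun s => 256 * (lam*s) ^ ((1:ℝ)/4) - F s)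
      (f' := fun s => 256/4 * lam * (lam*s) ^ (-(3:ℝ)/4) - thetaFn (lam*s) / s)
      (fun r hr => ((pow_quarter_deriv hlam hr.1 256).hasDerivWithinAt).sub (hF r hr))
      (fun r hr => by
        have h2 := theta_bound hlam hr
        simp only [sub_nonneg]
        linarith)
      (by simpa using (hHlim 256).sub hFlim) hs
    linarith [show (0:ℝ) ≤ 256 * (lam*s) ^ ((1:ℝ)/4) - F s from h1]
  -- Step 2 : 0 ≤ F
  have hFge : ∀ s ∈ Ioc (0:ℝ) b, 0 ≤ F s := by
    intro s hs
    refine le_of_lim hF (fun r hr => ?_) hFlim hs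
    have hu1 : lam * r ≤ 1 := by
      have := (le_div_iff₀ hlam).mp hr.2
      linarith [mul_comm r lam]
    exact div_nonneg (theta_nonneg (mul_pos hlam hr.1) hu1) hr.1.le
  -- s σ' ≤ σ on Ioc
  have hkey : ∀ s ∈ Ioc (0:ℝ) b, s * σ' s ≤ σ s := by
    intro s hs
    have h1 := hFge s hs
    have h2 : Real.log (s * σ' s) ≤ Real.log (σ s) := by
      rw [Real.log_mul (ne_of_gt hs.1) (ne_of_gt (hpos s hs).2)]
      simp only [hFdef] at h1
      linarith
    exact (Real.log_le_log_iff (mul_pos hs.1 (hpos s hs).2) (hpos s hs).1).mp h2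
  -- Step 3 : G ≤ 0
  have hGle : ∀ s ∈ Ioc (0:ℝ) b, G s ≤ 0 := by
    intro s hs
    have h1 := le_of_lim (b := b)
      (f := fun s => -G s) (f' := fun s => -(σ' s / σ s - s⁻¹))
      (fun r hr => (hGd r hr).neg)
      (fun r hr => by
        have h2 : σ' r / σ r ≤ r⁻¹ := by
          rw [div_le_iff₀ (hpos r hr).1, inv_mul_eq_div, le_div_iff₀ hr.1]
          linarith [hkey r hr, mul_comm (σ' r) r]
        linarith)
      (by simpa using hGlim.neg) hs
    linarith [show (0:ℝ) ≤ -G s from h1]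
  -- exp(-F) identity
  have hePF : ∀ s ∈ Ioc (0:ℝ) b, Real.exp (-(F s)) = σ' s * s / σ s := by
    intro s hs
    have h1 : -(F s) = (Real.log (σ' s) + Real.log s) - Real.log (σ s) := by
      simp only [hFdef]; ring
    rw [h1, Real.exp_sub, Real.exp_add, Real.exp_log (hpos s hs).2,
      Real.exp_log hs.1, Real.exp_log (hpos s hs).1]
  -- Step 4 : G ≥ -1024 (lam s)^{1/4}
  have hGge : ∀ s ∈ Ioc (0:ℝ) b, -(1024 * (lam*s) ^ ((1:ℝ)/4)) ≤ G s := by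
    intro s hs
    have h1 := le_of_lim (b := b)
      (f := fun s => G s + 1024 * (lam*s) ^ ((1:ℝ)/4))
      (f' := fun s => (σ' s / σ s - s⁻¹) + 1024/4 * lam * (lam*s) ^ (-(3:ℝ)/4))
      (fun r hr => (hGd r hr).add ((pow_quarter_deriv hlam hr.1 1024).hasDerivWithinAt))
      (fun r hr => by
        have hu0 : 0 < lam * r := mul_pos hlam hr.1
        have hr0 : r ≠ 0 := ne_of_gt hr.1
        have hσ0 : σ r ≠ 0 := ne_of_gt (hpos r hr).1
        show (0:ℝ) ≤ (σ' r / σ r - r⁻¹) + 1024/4 * lam * (lam*r) ^ (-(3:ℝ)/4)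
        have hid : σ' r / σ r - r⁻¹ = (Real.exp (-(F r)) - 1) / r := by
          rw [hePF r hr]
          field_simp [hr0, hσ0]
        have h3 : -(F r) ≤ Real.exp (-(F r)) - 1 := by
          linarith [Real.add_one_le_exp (-(F r))]
        have h4 : -(256 * (lam*r) ^ ((1:ℝ)/4)) ≤ -(F r) := by
          linarith [hFleH r hr]
        have e4 : (lam*r) ^ ((1:ℝ)/4) / r = lam * (lam*r) ^ (-(3:ℝ)/4) := by
          have e5 : (lam*r) ^ ((1:ℝ)/4) = (lam*r) ^ (-(3:ℝ)/4) * (lam*r) := by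
            rw [← Real.rpow_add_one hu0.ne']; norm_num
          rw [e5]
          field_simp
        have h5 : (-(256 * (lam*r) ^ ((1:ℝ)/4))) / r ≤ (Real.exp (-(F r)) - 1) / r :=
          (div_le_div_iff_of_pos_right hr.1).mpr (le_trans h4 h3)
        have h6 : (-(256 * (lam*r) ^ ((1:ℝ)/4))) / r = -(256 * lam * (lam*r) ^ (-(3:ℝ)/4)) := by
          rw [neg_div, mul_div_assoc, e4]; ring
        rw [hid]
        rw [h6] at h5
        linarith)
      (by simpa using hGlim.add (hHlim 1024)) hs
    linarith [show (0:ℝ) ≤ G s + 1024 * (lam*s) ^ ((1:ℝ)/4) from h1]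
  -- conclusion
  rcases eq_or_lt_of_le ht0 with rfl | htpos
  · refine ⟨by simp [h0σ], by simp [h0σ], ?_, by simp [h0σ']⟩
    rw [h0σ']
    rw [div_le_one (Real.exp_pos _)]
    exact Real.one_le_exp (by norm_num)
  · have ht : t ∈ Ioc (0:ℝ) b := ⟨htpos, by
      rw [hbdef, le_div_iff₀ hlam]; linarith [mul_comm t lam]⟩
    have hq : (lam*t) ^ ((1:ℝ)/4) ≤ 1 :=
      Real.rpow_le_one (by positivity) hlt1 (by norm_num)
    have hF1 : 0 ≤ F t := hFge t ht
    have hF2 : F t ≤ 256 := le_trans (hFleH t ht) (by nlinarith)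
    have hG1 : -1024 ≤ G t := le_trans (by nlinarith) (hGge t ht)
    have hG2 : G t ≤ 0 := hGle t ht
    have hσpos := (hpos t ht).1
    have hσ'pos := (hpos t ht).2
    have hGe : Real.exp (G t) = σ t / t := by
      simp only [hGdef]
      rw [Real.exp_sub, Real.exp_log hσpos, Real.exp_log htpos]
    have hσeq : σ t = t * Real.exp (G t) := by
      rw [hGe]; field_simp
    have hσ'eq : σ' t = Real.exp (G t - F t) := by
      have : G t - F t = Real.log (σ' t) := by simp only [hFdef, hGdef]; ring
      rw [this, Real.exp_log hσ'pos]
    refine ⟨?_, ?_, ?_, ?_⟩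
    · have h7 : Real.exp (-(1280:ℝ)) ≤ Real.exp (G t) := Real.exp_le_exp.mpr (by linarith)
      have h8 : t * Real.exp (-(1280:ℝ)) ≤ t * Real.exp (G t) :=
        mul_le_mul_of_nonneg_left h7 ht0
      rw [← hσeq] at h8
      calc t / Real.exp 1280 = t * Real.exp (-(1280:ℝ)) := by
            rw [Real.exp_neg]; ring
        _ ≤ σ t := h8
    · have h7 : Real.exp (G t) ≤ 1 := Real.exp_le_one_iff.mpr hG2
      calc σ t = t * Real.exp (G t) := hσeq
        _ ≤ t * 1 := mul_le_mul_of_nonneg_left h7 ht0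
        _ = t := mul_one t
    · rw [hσ'eq]
      rw [div_le_iff₀ (Real.exp_pos _)]
      rw [← Real.exp_add]
      exact Real.one_le_exp (by linarith)
    · rw [hσ'eq]
      exact Real.exp_le_one_iff.mpr (by linarith)

end Stmt1Proof
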